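/- Truncated non-resonance estimate (key claim in the proof of the normal form Theorem 4.1): Let ω : N → ℝ be a family of frequencies and let ℓ ≥ 3. Assume that for each r ∈ {ℓ−2, ℓ−1, ℓ} there exist γ_r > 0 and α_r ≥ 0 such that |Ω(k)| ≥ γ_r · μ(k)^{−α_r} for every multi-index k ∈ Z^r with k ∉ A_r. Let Λ > 0 be a cutoff with ω_0 ≤ Λ (where 0 ∈ N = ℤ^d), and let j = (j_1,…,j_ℓ) ∈ I_ℓ with j ∉ A_ℓ be a zero-moment multi-index having at most two components j_i = (a_i,δ_i) with ω_{a_i} > Λ; in the case of exactly two such components j_p and j_q, assume δ_p = −δ_q. Then |Ω^Λ(j)| ≥ γ · μ(j)^{−α}, where γ = min(γ_ℓ, γ_{ℓ−1}, γ_{ℓ−2}) and α = max(α_ℓ, α_{ℓ−1}, α_{ℓ−2}). -/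

import Mathlib

open scoped BigOperators

/-- The index set `Z = ℤ^d × {±1}`; the sign `δ = ±1` is encoded by a `Bool`
(`true ↦ +1`, `false ↦ -1`). -/
abbrev Idx (d : ℕ) := (Fin d → ℤ) × Bool

/-- The sign associated with a boolean. -/
def sgn (b : Bool) : ℤ := if b then 1 else -1

/-- Conjugation `(a, δ) ↦ (a, -δ)`. -/
def conjIdx {d : ℕ} (j : Idx d) : Idx d := (j.1, !j.2)

/-- `|j| = max(1, ‖a‖)` with `‖a‖` the Euclidean norm of `a ∈ ℤ^d`. -/
noncomputable def absIdx {d : ℕ} (j : Idx d) : ℝ :=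
  max 1 (Real.sqrt (∑ i, ((j.1 i : ℝ)) ^ 2))

/-- The moment `M(j) = δ₁ a₁ + ⋯ + δ_ℓ a_ℓ ∈ ℤ^d` of a multi-index. -/
def moment {d ℓ : ℕ} (j : Fin ℓ → Idx d) : Fin d → ℤ :=
  ∑ i, sgn (j i).2 • (j i).1

/-- `Ω(j) = δ₁ ω_{a₁} + ⋯ + δ_ℓ ω_{a_ℓ}`. -/
def bigOmega {d ℓ : ℕ} (ω : (Fin d → ℤ) → ℝ) (j : Fin ℓ → Idx d) : ℝ :=
  ∑ i, (sgn (j i).2 : ℝ) * ω (j i).1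

/-- `j ∈ A_ℓ` : the multi-index depends only on the actions, i.e. `ℓ` is even and `j`
is a permutation of `((b₁,1),…,(b_{ℓ/2},1),(b₁,-1),…,(b_{ℓ/2},-1))`. -/
def dependsOnActions {d ℓ : ℕ} (j : Fin ℓ → Idx d) : Prop :=
  ∃ (m : ℕ) (b : Fin m → (Fin d → ℤ)), ℓ = 2 * m ∧
    Finset.univ.val.map j =
      Finset.univ.val.map (fun i => ((b i, true) : Idx d)) +
        Finset.univ.val.map (fun i => ((b i, false) : Idx d))

/-- `μ(j)`: the third largest element of `(|j₁|,…,|j_ℓ|)` (and `1` when `ℓ < 3`). -/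
noncomputable def mu {d ℓ : ℕ} (j : Fin ℓ → Idx d) : ℝ :=
  ((List.ofFn fun i => absIdx (j i)).insertionSort (· ≥ ·)).getD 2 1

/-- Truncated frequencies: `ω^Λ_a = ω_a` if `ω_a ≤ Λ`, and `0` otherwise. -/
noncomputable def truncFreq {d : ℕ} (ω : (Fin d → ℤ) → ℝ) (Λ : ℝ) (a : Fin d → ℤ) : ℝ :=
  if ω a ≤ Λ then ω a else 0

/-! ### Auxiliary lemmas -/

lemma multiset_map_succAbove {α : Type*} {n : ℕ} (j : Fin (n+1) → α) (p : Fin (n+1)) :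
    (Finset.univ.val.map j) = j p ::ₘ Finset.univ.val.map (fun i => j (p.succAbove i)) := by
  rw [Fin.univ_succAbove n p, Finset.cons_val, Multiset.map_cons, Finset.map_val,
    Multiset.map_map]
  rfl

lemma list_ofFn_coe {α : Type*} {n : ℕ} (f : Fin n → α) :
    ((List.ofFn f : List α) : Multiset α) = Finset.univ.val.map f := by
  simp [List.ofFn_eq_map, Finset.univ, Fintype.elems]

lemma sum_eq_zero_of_dOA {d ℓ : ℕ} {k : Fin ℓ → Idx d} (h : dependsOnActions k)
    {M : Type*} [AddCommGroup M] (F : Idx d → M) (hF : ∀ a, F (a, true) + F (a, false) = 0) :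
    ∑ i, F (k i) = 0 := by
  obtain ⟨m, b, -, hmap⟩ := h
  have : ∑ i, F (k i) = ((Finset.univ.val.map k).map F).sum := by
    rw [Multiset.map_map]; rfl
  rw [this, hmap, Multiset.map_add, Multiset.sum_add, Multiset.map_map, Multiset.map_map]
  have h1 : ((Finset.univ.val).map (F ∘ fun i => ((b i, true) : Idx d))).sum
      = ∑ i, F (b i, true) := rfl
  have h2 : ((Finset.univ.val).map (F ∘ fun i => ((b i, false) : Idx d))).sum
      = ∑ i, F (b i, false) := rfl
  rw [h1, h2, ← Finset.sum_add_distrib]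
  simp [hF]

lemma bigOmega_eq_zero_of_dOA {d ℓ : ℕ} (ω : (Fin d → ℤ) → ℝ) {k : Fin ℓ → Idx d}
    (h : dependsOnActions k) : bigOmega ω k = 0 := by
  refine sum_eq_zero_of_dOA h (fun z => (sgn z.2 : ℝ) * ω z.1) ?_
  intro a; simp [sgn]

lemma moment_eq_zero_of_dOA {d ℓ : ℕ} {k : Fin ℓ → Idx d}
    (h : dependsOnActions k) : moment k = 0 := by
  refine sum_eq_zero_of_dOA h (fun z => sgn z.2 • z.1) ?_
  intro a; simp [sgn]

lemma dOA_cons_pair {d ℓ : ℕ} {j : Fin (ℓ+2) → Idx d} {k : Fin ℓ → Idx d}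
    (a : Fin d → ℤ) (δ : Bool) (h : dependsOnActions k)
    (hmap : Finset.univ.val.map j = (a, δ) ::ₘ (a, !δ) ::ₘ Finset.univ.val.map k) :
    dependsOnActions j := by
  obtain ⟨m, b, hm, hk⟩ := h
  set b' : Fin (m+1) → (Fin d → ℤ) := Fin.cons a b with hb'
  refine ⟨m + 1, b', by omega, ?_⟩
  have ht : Finset.univ.val.map (fun i : Fin (m+1) => ((b' i, true) : Idx d))
      = (a, true) ::ₘ Finset.univ.val.map (fun i : Fin m => ((b i, true) : Idx d)) := by
    rw [multiset_map_succAbove (fun i : Fin (m+1) => ((b' i, true) : Idx d)) 0]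
    simp [hb', Fin.zero_succAbove]
  have hf : Finset.univ.val.map (fun i : Fin (m+1) => ((b' i, false) : Idx d))
      = (a, false) ::ₘ Finset.univ.val.map (fun i : Fin m => ((b i, false) : Idx d)) := by
    rw [multiset_map_succAbove (fun i : Fin (m+1) => ((b' i, false) : Idx d)) 0]
    simp [hb', Fin.zero_succAbove]
  rw [hmap, hk, ht, hf]
  cases δ
  · rw [Multiset.cons_add, Multiset.add_cons, Multiset.cons_swap]
    rfl
  · rw [Multiset.cons_add, Multiset.add_cons]
    rfl

noncomputable def thirdLargest (l : List ℝ) : ℝ := (l.insertionSort (· ≥ ·)).getD 2 1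

lemma one_le_thirdLargest {l : List ℝ} (h : ∀ x ∈ l, 1 ≤ x) : 1 ≤ thirdLargest l := by
  unfold thirdLargest
  by_cases h3 : 3 ≤ l.length
  · have hlen : 2 < (l.insertionSort (· ≥ ·)).length := by
      rw [List.length_insertionSort]; omega
    rw [List.getD_eq_getElem _ _ hlen]
    exact h _ ((l.perm_insertionSort (· ≥ ·)).mem_iff.mp (List.getElem_mem hlen))
  · rw [List.getD_eq_default]
    rw [List.length_insertionSort]; omega

lemma countP_ge_three {l : List ℝ} (hs : l.Pairwise (· ≥ ·)) {a b c : ℝ} {t : List ℝ}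
    (he : l = a :: b :: c :: t) : 3 ≤ l.countP (fun y => decide (c ≤ y)) := by
  subst he
  obtain ⟨h1, h2⟩ := List.pairwise_cons.mp hs
  obtain ⟨h4, h5⟩ := List.pairwise_cons.mp h2
  simp only [List.countP_cons]
  have ha : decide (c ≤ a) = true := decide_eq_true (h1 c (by simp))
  have hb : decide (c ≤ b) = true := decide_eq_true (h4 c (by simp))
  have hc : decide (c ≤ c) = true := decide_eq_true le_rfl
  rw [ha, hb, hc]
  simp

lemma le_third_of_countP {l : List ℝ} (hs : l.Pairwise (· ≥ ·)) {a b c x : ℝ} {t : List ℝ}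
    (he : l = a :: b :: c :: t) (hc : 3 ≤ l.countP (fun y => decide (x ≤ y))) : x ≤ c := by
  subst he
  by_contra hlt
  push_neg at hlt
  obtain ⟨h1, h2⟩ := List.pairwise_cons.mp hs
  obtain ⟨h3, h4⟩ := List.pairwise_cons.mp h2
  have hz : (c :: t).countP (fun y => decide (x ≤ y)) = 0 := by
    rw [List.countP_eq_zero]
    intro y hy
    simp only [decide_eq_true_eq]
    push_neg
    rcases List.mem_cons.mp hy with rfl | hy
    · exact hlt
    · exact lt_of_le_of_lt ((List.pairwise_cons.mp h4).1 y hy) hlt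
  simp only [List.countP_cons, hz] at hc
  split_ifs at hc <;> omega

lemma thirdLargest_le {l₁ l₂ : List ℝ} (hsub : List.Subperm l₁ l₂)
    (h2 : ∀ x ∈ l₂, 1 ≤ x) :
    thirdLargest l₁ ≤ thirdLargest l₂ := by
  by_cases h3 : 3 ≤ l₁.length
  case neg =>
    have : thirdLargest l₁ = 1 := by
      unfold thirdLargest
      rw [List.getD_eq_default]
      rw [List.length_insertionSort]; omega
    rw [this]
    exact one_le_thirdLargest h2
  have h3' : 3 ≤ l₂.length := le_trans h3 hsub.length_le
  set s₁ := l₁.insertionSort (· ≥ ·) with hs₁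
  set s₂ := l₂.insertionSort (· ≥ ·) with hs₂
  have hlen1 : s₁.length = l₁.length := List.length_insertionSort _ _
  have hlen2 : s₂.length = l₂.length := List.length_insertionSort _ _
  have hsort1 : s₁.Pairwise (· ≥ ·) := List.pairwise_insertionSort _ _
  have hsort2 : s₂.Pairwise (· ≥ ·) := List.pairwise_insertionSort _ _
  obtain ⟨a1, b1, c1, t1, he1⟩ : ∃ a b c t, s₁ = a :: b :: c :: t := by
    match s₁, (by omega : 3 ≤ s₁.length) with
    | a :: b :: c :: t, _ => exact ⟨a, b, c, t, rfl⟩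
  obtain ⟨a2, b2, c2, t2, he2⟩ : ∃ a b c t, s₂ = a :: b :: c :: t := by
    match s₂, (by omega : 3 ≤ s₂.length) with
    | a :: b :: c :: t, _ => exact ⟨a, b, c, t, rfl⟩
  have hT1 : thirdLargest l₁ = c1 := by unfold thirdLargest; rw [← hs₁, he1]; rfl
  have hT2 : thirdLargest l₂ = c2 := by unfold thirdLargest; rw [← hs₂, he2]; rfl
  rw [hT1, hT2]
  have hc1 : 3 ≤ l₁.countP (fun y => decide (c1 ≤ y)) := by
    rw [← (l₁.perm_insertionSort (· ≥ ·)).countP_eq]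
    exact countP_ge_three hsort1 he1
  have hc2 : 3 ≤ l₂.countP (fun y => decide (c1 ≤ y)) :=
    le_trans hc1 (hsub.countP_le _)
  refine le_third_of_countP hsort2 he2 ?_
  rwa [(l₂.perm_insertionSort (· ≥ ·)).countP_eq]

lemma one_le_absList {d n : ℕ} (j : Fin n → Idx d) :
    ∀ x ∈ (List.ofFn fun i => absIdx (j i)), 1 ≤ x := by
  intro x hx
  obtain ⟨i, rfl⟩ := List.mem_ofFn.mp hx
  exact le_max_left _ _

lemma one_le_mu {d n : ℕ} (j : Fin n → Idx d) : 1 ≤ mu j :=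
  one_le_thirdLargest (one_le_absList j)

lemma mu_succAbove_le {d n : ℕ} (j : Fin (n+1) → Idx d) (p : Fin (n+1)) :
    mu (fun i => j (p.succAbove i)) ≤ mu j := by
  refine thirdLargest_le ?_ (one_le_absList j)
  rw [← Multiset.coe_le, list_ofFn_coe, list_ofFn_coe,
    multiset_map_succAbove (fun i => absIdx (j i)) p]
  exact Multiset.le_cons_self _ _

lemma chain_bound {γ γr α αr μk μj W : ℝ} (hγ : 0 < γ) (hγr : γ ≤ γr)
    (hαr : 0 ≤ αr) (hα : αr ≤ α) (h1 : 1 ≤ μk) (hkj : μk ≤ μj)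
    (h : γr * μk ^ (-αr) ≤ W) : γ * μj ^ (-α) ≤ W := by
  have h0k : (0:ℝ) < μk := lt_of_lt_of_le one_pos h1
  have e1 : μj ^ (-α) ≤ μk ^ (-α) :=
    Real.rpow_le_rpow_of_nonpos h0k hkj (neg_nonpos.mpr (le_trans hαr hα))
  have e2 : μk ^ (-α) ≤ μk ^ (-αr) :=
    Real.rpow_le_rpow_of_exponent_le h1 (by linarith)
  calc γ * μj ^ (-α) ≤ γ * μk ^ (-αr) :=
        mul_le_mul_of_nonneg_left (le_trans e1 e2) hγ.le
    _ ≤ γr * μk ^ (-αr) :=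
        mul_le_mul_of_nonneg_right hγr (Real.rpow_nonneg h0k.le _)
    _ ≤ W := h

theorem truncated_nonresonance_estimate
    {d : ℕ} (hd : 1 ≤ d) (ω : (Fin d → ℤ) → ℝ) (ℓ : ℕ) (hℓ : 3 ≤ ℓ)
    (γℓ γℓ1 γℓ2 αℓ αℓ1 αℓ2 : ℝ)
    (hγℓ : 0 < γℓ) (hγℓ1 : 0 < γℓ1) (hγℓ2 : 0 < γℓ2)
    (hαℓ : 0 ≤ αℓ) (hαℓ1 : 0 ≤ αℓ1) (hαℓ2 : 0 ≤ αℓ2)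
    (hresℓ : ∀ k : Fin ℓ → Idx d, ¬ dependsOnActions k →
      γℓ * mu k ^ (-αℓ) ≤ |bigOmega ω k|)
    (hresℓ1 : ∀ k : Fin (ℓ - 1) → Idx d, ¬ dependsOnActions k →
      γℓ1 * mu k ^ (-αℓ1) ≤ |bigOmega ω k|)
    (hresℓ2 : ∀ k : Fin (ℓ - 2) → Idx d, ¬ dependsOnActions k →
      γℓ2 * mu k ^ (-αℓ2) ≤ |bigOmega ω k|)
    (Λ : ℝ) (hΛ : 0 < Λ) (hω0 : ω 0 ≤ Λ)
    (j : Fin ℓ → Idx d) (hmom : moment j = 0) (hA : ¬ dependsOnActions j)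
    (hbig : (Finset.univ.filter (fun i => Λ < ω (j i).1)).card ≤ 2)
    (hpair : ∀ p q : Fin ℓ, p ≠ q → Λ < ω (j p).1 → Λ < ω (j q).1 →
      (j p).2 = !(j q).2) :
    min (min γℓ γℓ1) γℓ2 * mu j ^ (-(max (max αℓ αℓ1) αℓ2)) ≤
      |bigOmega (truncFreq ω Λ) j| := by
  obtain ⟨n, rfl⟩ : ∃ n, ℓ = n + 3 := ⟨ℓ - 3, by omega⟩
  have hres1' : ∀ k : Fin (n+2) → Idx d, ¬ dependsOnActions k →
      γℓ1 * mu k ^ (-αℓ1) ≤ |bigOmega ω k| := hresℓ1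
  have hres2' : ∀ k : Fin (n+1) → Idx d, ¬ dependsOnActions k →
      γℓ2 * mu k ^ (-αℓ2) ≤ |bigOmega ω k| := hresℓ2
  have hγpos : 0 < min (min γℓ γℓ1) γℓ2 := lt_min (lt_min hγℓ hγℓ1) hγℓ2
  set S := Finset.univ.filter (fun i => Λ < ω (j i).1) with hSdef
  have hmem : ∀ i, i ∈ S ↔ Λ < ω (j i).1 := by intro i; simp [hSdef]
  rcases (by omega : S.card = 0 ∨ S.card = 1 ∨ S.card = 2) with hc | hc | hc
  · -- no large frequencies
    have hempty := Finset.card_eq_zero.mp hc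
    have small : ∀ i, ω (j i).1 ≤ Λ := by
      intro i
      by_contra hlt
      have hiS : i ∈ S := (hmem i).mpr (lt_of_not_ge hlt)
      rw [hempty] at hiS
      exact absurd hiS (Finset.notMem_empty i)
    have hEq : bigOmega (truncFreq ω Λ) j = bigOmega ω j := by
      unfold bigOmega truncFreq
      exact Finset.sum_congr rfl fun i _ => by rw [if_pos (small i)]
    rw [hEq]
    exact chain_bound hγpos ((min_le_left _ _).trans (min_le_left _ _)) hαℓ
      ((le_max_left _ _).trans (le_max_left _ _)) (one_le_mu j) le_rfl (hresℓ j hA)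
  · -- exactly one large frequency
    obtain ⟨p, hp⟩ := Finset.card_eq_one.mp hc
    have hbigp : Λ < ω (j p).1 := (hmem p).mp (by rw [hp]; exact Finset.mem_singleton_self p)
    have small : ∀ i : Fin (n+3), i ≠ p → ω (j i).1 ≤ Λ := by
      intro i hip
      by_contra hlt
      have hiS : i ∈ S := (hmem i).mpr (lt_of_not_ge hlt)
      rw [hp, Finset.mem_singleton] at hiS
      exact hip hiS
    set k : Fin (n+2) → Idx d := fun i => j (p.succAbove i) with hkdef
    have hEq : bigOmega (truncFreq ω Λ) j = bigOmega ω k := by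
      unfold bigOmega
      rw [Fin.sum_univ_succAbove (fun i => (sgn (j i).2 : ℝ) * truncFreq ω Λ (j i).1) p]
      have h0 : truncFreq ω Λ (j p).1 = 0 := by
        rw [truncFreq, if_neg (not_le.mpr hbigp)]
      rw [h0, mul_zero, zero_add]
      exact Finset.sum_congr rfl fun i _ => by
        rw [truncFreq, if_pos (small _ (Fin.succAbove_ne p i))]
    have hknA : ¬ dependsOnActions k := by
      intro hA'
      have hmk := moment_eq_zero_of_dOA hA'
      have hsplit : moment j = sgn (j p).2 • (j p).1 + moment k :=
        Fin.sum_univ_succAbove (fun i => sgn (j i).2 • (j i).1) p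
      rw [hmom, hmk, add_zero] at hsplit
      have hzero : (j p).1 = 0 := by
        cases hb : (j p).2 <;> rw [hb] at hsplit <;>
          simp [sgn, neg_smul, one_smul, neg_eq_zero, eq_comm] at hsplit <;>
          exact hsplit
      rw [hzero] at hbigp
      linarith
    rw [hEq]
    have hmuk : mu k ≤ mu j := mu_succAbove_le j p
    exact chain_bound hγpos ((min_le_left _ _).trans (min_le_right _ _)) hαℓ1
      ((le_max_right _ _).trans (le_max_left _ _)) (one_le_mu k) hmuk (hres1' k hknA)
  · -- exactly two large frequencies
    obtain ⟨p, q, hpq, hS2⟩ := Finset.card_eq_two.mp hc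
    have hbigp : Λ < ω (j p).1 := (hmem p).mp (by rw [hS2]; simp)
    have hbigq : Λ < ω (j q).1 := (hmem q).mp (by rw [hS2]; simp)
    have small : ∀ i : Fin (n+3), i ≠ p → i ≠ q → ω (j i).1 ≤ Λ := by
      intro i hip hiq
      by_contra hlt
      have hiS : i ∈ S := (hmem i).mpr (lt_of_not_ge hlt)
      rw [hS2, Finset.mem_insert, Finset.mem_singleton] at hiS
      tauto
    obtain ⟨q', hq'⟩ := Fin.exists_succAbove_eq (show q ≠ p from hpq.symm)
    set k1 : Fin (n+2) → Idx d := fun i => j (p.succAbove i) with hk1def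
    set k : Fin (n+1) → Idx d := fun i => k1 (q'.succAbove i) with hkdef
    have hk1q' : k1 q' = j q := by rw [hk1def]; simp only []; rw [hq']
    have hne1 : ∀ i : Fin (n+1), p.succAbove (q'.succAbove i) ≠ p :=
      fun i => Fin.succAbove_ne p _
    have hne2 : ∀ i : Fin (n+1), p.succAbove (q'.succAbove i) ≠ q := by
      intro i he
      have : q'.succAbove i = q' := Fin.succAbove_right_injective (by rw [he, hq'])
      exact Fin.succAbove_ne q' i this
    have hEq : bigOmega (truncFreq ω Λ) j = bigOmega ω k := by
      unfold bigOmega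
      rw [Fin.sum_univ_succAbove (fun i => (sgn (j i).2 : ℝ) * truncFreq ω Λ (j i).1) p,
        Fin.sum_univ_succAbove
          (fun i => (sgn (j (p.succAbove i)).2 : ℝ) * truncFreq ω Λ (j (p.succAbove i)).1) q']
      have h0p : truncFreq ω Λ (j p).1 = 0 := by
        rw [truncFreq, if_neg (not_le.mpr hbigp)]
      have h0q : truncFreq ω Λ (j (p.succAbove q')).1 = 0 := by
        rw [hq', truncFreq, if_neg (not_le.mpr hbigq)]
      rw [h0p, h0q, mul_zero, mul_zero, zero_add, zero_add]
      exact Finset.sum_congr rfl fun i _ => by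
        rw [truncFreq, if_pos (small _ (hne1 i) (hne2 i))]
    have hmap : Finset.univ.val.map j = j p ::ₘ j q ::ₘ Finset.univ.val.map k := by
      rw [multiset_map_succAbove j p, multiset_map_succAbove k1 q', hk1q']
    have hδ : (j p).2 = !(j q).2 := hpair p q hpq hbigp hbigq
    have hknA : ¬ dependsOnActions k := by
      intro hA'
      have hmk := moment_eq_zero_of_dOA hA'
      have hsplit : moment j
          = sgn (j p).2 • (j p).1 + (sgn (j q).2 • (j q).1 + moment k) := by
        have h1 := Fin.sum_univ_succAbove (fun i => sgn (j i).2 • (j i).1) p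
        have h2 := Fin.sum_univ_succAbove (fun i => sgn (k1 i).2 • (k1 i).1) q'
        rw [hk1q'] at h2
        rw [moment, h1, h2]
        rfl
      rw [hmom, hmk, add_zero] at hsplit
      have haq : (j q).1 = (j p).1 := by
        have hsgn : sgn (j p).2 = - sgn (j q).2 := by
          rw [hδ]; cases (j q).2 <;> simp [sgn]
        rw [hsgn, neg_smul, eq_comm, neg_add_eq_zero] at hsplit
        cases hb : (j q).2 <;> rw [hb] at hsplit <;> simp [sgn] at hsplit <;>
          exact hsplit.symm
      have hjq : j q = ((j p).1, !(j p).2) := by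
        have : (j q).2 = !(j p).2 := by rw [hδ, Bool.not_not]
        rw [← Prod.mk.eta (p := j q), haq, this]
      refine hA (dOA_cons_pair (j p).1 (j p).2 hA' ?_)
      rw [hmap, hjq, Prod.mk.eta]
    rw [hEq]
    have hmuk : mu k ≤ mu j :=
      le_trans (mu_succAbove_le k1 q') (mu_succAbove_le j p)
    exact chain_bound hγpos (min_le_right _ _) hαℓ2 (le_max_right _ _)
      (one_le_mu k) hmuk (hres2' k hknA)
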